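/- Let X be a real Banach space and let A ⊆ X be a Suslin set. Then for every separable linear subspace V₀ ⊆ X there exists a closed separable linear subspace V ⊆ X with V₀ ⊆ V such that A is σ-upper porous in X if and only if A ∩ V is σ-upper porous in the metric space V. -/

import Mathlib

open Metric Filter Set Topology TopologicalSpace NNReal ENNReal

/-- `porosityGamma A x R` is the supremum of all radii `r ≥ 0` for which there exists `z`
with the open ball `U(z,r)` contained in `U(x,R) \\ A`. -/
noncomputable def porosityGamma {X : Type*} [MetricSpace X] (A : Set X) (x : X) (R : ℝ) :
    ℝ≥0∞ :=
  ⨆ (r : ℝ≥0) (_ : ∃ z : X, Metric.ball z (r : ℝ) ⊆ Metric.ball x R \ A), (r : ℝ≥0∞)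

/-- `A` is upper porous at `x` if `limsup_{R→0+} γ(x,R,A)/R > 0`. -/
def UpperPorousAt {X : Type*} [MetricSpace X] (A : Set X) (x : X) : Prop :=
  0 < Filter.limsup (fun R : ℝ => porosityGamma A x R / ENNReal.ofReal R) (𝓝[>] (0 : ℝ))

/-- `A` is upper porous if it is upper porous at each of its points. -/
def UpperPorous {X : Type*} [MetricSpace X] (A : Set X) : Prop :=
  ∀ x ∈ A, UpperPorousAt A x

/-- `A` is σ-upper porous if it is a countable union of upper porous sets. -/
def SigmaUpperPorous {X : Type*} [MetricSpace X] (A : Set X) : Prop :=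
  ∃ B : ℕ → Set X, (∀ n, UpperPorous (B n)) ∧ A = ⋃ n, B n

section Helpers

variable {Y : Type*} [MetricSpace Y]

lemma le_porosityGamma {A : Set Y} {x : Y} {R : ℝ} {r : ℝ≥0}
    (h : ∃ z : Y, Metric.ball z (r : ℝ) ⊆ Metric.ball x R \ A) :
    (r : ℝ≥0∞) ≤ porosityGamma A x R :=
  le_iSup₂ (f := fun (r : ℝ≥0) (_ : ∃ z : Y, Metric.ball z (r:ℝ) ⊆ Metric.ball x R \ A) =>
    (r : ℝ≥0∞)) r h

lemma exists_lt_of_lt_porosityGamma {A : Set Y} {x : Y} {R : ℝ} {a : ℝ≥0∞}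
    (h : a < porosityGamma A x R) :
    ∃ r : ℝ≥0, (∃ z : Y, Metric.ball z (r:ℝ) ⊆ Metric.ball x R \ A) ∧ a < (r : ℝ≥0∞) := by
  simp only [porosityGamma, lt_iSup_iff] at h
  obtain ⟨r, hr, ha⟩ := h
  exact ⟨r, hr, ha⟩

lemma porosityGamma_mono_ball {A : Set Y} {x y : Y} {R S : ℝ}
    (h : Metric.ball x R ⊆ Metric.ball y S) :
    porosityGamma A x R ≤ porosityGamma A y S := by
  refine iSup₂_le fun r hr => le_porosityGamma ?_
  obtain ⟨z, hz⟩ := hr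
  exact ⟨z, fun w hw => ⟨h (hz hw).1, (hz hw).2⟩⟩

lemma exists_porosity_witness (A : Set Y) (d : Y) (q : ℝ) :
    ∃ (z : Y) (r : ℝ≥0), Metric.ball z (r:ℝ) ⊆ Metric.ball d q \ A ∧
      min (porosityGamma A d q) (ENNReal.ofReal q) / 2 ≤ (r : ℝ≥0∞) := by
  set m := min (porosityGamma A d q) (ENNReal.ofReal q) with hm_def
  rcases eq_or_ne m 0 with hm | hm
  · refine ⟨d, 0, ?_, by simp [← hm_def, hm]⟩
    simp [Metric.ball_zero]
  · have hmtop : m ≠ ⊤ := ne_top_of_le_ne_top ENNReal.ofReal_ne_top (min_le_right _ _)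
    have hlt : m / 2 < m := ENNReal.half_lt_self hm hmtop
    have h2 : m / 2 < porosityGamma A d q := lt_of_lt_of_le hlt (min_le_left _ _)
    obtain ⟨r, hr, hlt'⟩ := exists_lt_of_lt_porosityGamma h2
    obtain ⟨z, hz⟩ := hr
    exact ⟨z, r, hz, hlt'.le⟩

end Helpers

section Core

variable {X : Type*} [NormedAddCommGroup X] [NormedSpace ℝ X]


lemma upperPorousAt_image_val {V : Subspace ℝ X} {B' : Set ↥V} {x' : ↥V} (hx'B : x' ∈ B')
    (h : UpperPorousAt B' x') : UpperPorousAt (Subtype.val '' B') (x' : X) := by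
  have key : ∀ R : ℝ, porosityGamma B' x' R ≤ porosityGamma (Subtype.val '' B') (x' : X) R := by
    intro R
    refine iSup₂_le fun r hr => le_porosityGamma ?_
    obtain ⟨z', hz'⟩ := hr
    rcases le_or_gt (r : ℝ) 0 with hr0 | hr0
    · exact ⟨(x' : X), by rw [Metric.ball_eq_empty.2 hr0]; exact empty_subset _⟩
    refine ⟨(z' : X), ?_⟩
    have havoid : ∀ u : X, u ∈ Metric.ball (z' : X) (r : ℝ) → u ∉ Subtype.val '' B' := by
      rintro u hu ⟨u', hu'B, rfl⟩
      have : u' ∈ Metric.ball z' (r : ℝ) := by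
        rw [mem_ball, Subtype.dist_eq]
        exact mem_ball.1 hu
      exact (hz' this).2 hu'B
    have hdist : dist (z' : X) (x' : X) + (r : ℝ) ≤ R := by
      by_cases hzx : (z' : X) = (x' : X)
      · -- need (r:ℝ) ≤ R
        by_cases hVt : ∀ v : X, v ∈ V → v = 0
        · -- trivial subspace: contradiction with x' ∈ B'
          exfalso
          have hz'x' : z' = x' := Subtype.ext hzx
          have : x' ∈ Metric.ball z' (r : ℝ) := by
            rw [mem_ball, hz'x', dist_self]; exact hr0
          exact (hz' this).2 hx'B
        · push_neg at hVt
          obtain ⟨v, hvV, hv0⟩ := hVt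
          have hvn : 0 < ‖v‖ := norm_pos_iff.2 hv0
          have step : ∀ s : ℝ, 0 ≤ s → s < (r : ℝ) → s < R := by
            intro s hs0 hsr
            have hpV : (x' : X) + (s / ‖v‖) • v ∈ V := V.add_mem x'.2 (V.smul_mem _ hvV)
            have hdpz : dist (⟨_, hpV⟩ : ↥V) z' = s := by
              rw [Subtype.dist_eq, hzx]
              simp only [dist_eq_norm, add_sub_cancel_left, norm_smul,
                Real.norm_eq_abs, abs_of_nonneg (div_nonneg hs0 hvn.le)]
              field_simp
            have hp : (⟨_, hpV⟩ : ↥V) ∈ Metric.ball z' (r : ℝ) := by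
              rw [mem_ball, hdpz]; exact hsr
            have hdx : dist (⟨_, hpV⟩ : ↥V) x' < R := mem_ball.1 (hz' hp).1
            rw [Subtype.dist_eq] at hdx
            simpa [dist_eq_norm, norm_smul, Real.norm_eq_abs,
              abs_of_nonneg (div_nonneg hs0 hvn.le), div_mul_cancel₀ _ hvn.ne', abs_of_nonneg hs0] using hdx
          have hR0 : 0 < R := step 0 le_rfl hr0
          have hrR : (r : ℝ) ≤ R := by
            by_contra hc
            push_neg at hc
            exact absurd (step R hR0.le hc) (lt_irrefl R)
          rw [hzx, dist_self]; linarith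
      · set w : X := (z' : X) - (x' : X) with hw_def
        have hw0 : w ≠ 0 := sub_ne_zero.2 hzx
        have hwn : 0 < ‖w‖ := norm_pos_iff.2 hw0
        have hwV : w ∈ V := V.sub_mem z'.2 x'.2
        have step : ∀ s : ℝ, 0 ≤ s → s < (r : ℝ) → ‖w‖ + s < R := by
          intro s hs0 hsr
          have hpV : (z' : X) + (s / ‖w‖) • w ∈ V := V.add_mem z'.2 (V.smul_mem _ hwV)
          have hdpz : dist (⟨_, hpV⟩ : ↥V) z' = s := by
            rw [Subtype.dist_eq]
            simp only [dist_eq_norm, add_sub_cancel_left, norm_smul,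
              Real.norm_eq_abs, abs_of_nonneg (div_nonneg hs0 hwn.le)]
            field_simp
          have hp : (⟨_, hpV⟩ : ↥V) ∈ Metric.ball z' (r : ℝ) := by
            rw [mem_ball, hdpz]; exact hsr
          have hdx : dist (⟨_, hpV⟩ : ↥V) x' < R := mem_ball.1 (hz' hp).1
          rw [Subtype.dist_eq] at hdx
          have hcalc : dist ((z' : X) + (s / ‖w‖) • w) (x' : X) = ‖w‖ + s := by
            rw [dist_eq_norm]
            have h1 : (z' : X) + (s / ‖w‖) • w - (x' : X) = (1 + s / ‖w‖) • w := by
              rw [add_smul, one_smul, hw_def]; abel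
            rw [h1, norm_smul, Real.norm_eq_abs,
              abs_of_nonneg (by positivity), add_mul, one_mul, div_mul_cancel₀ _ hwn.ne']
          rw [hcalc] at hdx
          exact hdx
        by_contra hc
        push_neg at hc
        rw [dist_eq_norm, ← hw_def] at hc
        have h1 : ‖w‖ < R := by simpa using step 0 le_rfl hr0
        have h2 := step (R - ‖w‖) (by linarith) (by linarith)
        linarith
    intro u hu
    refine ⟨?_, havoid u hu⟩
    rw [mem_ball]
    have := dist_triangle u (z' : X) (x' : X)
    have hu' := mem_ball.1 hu
    linarith
  have hle : Filter.limsup (fun R : ℝ => porosityGamma B' x' R / ENNReal.ofReal R) (𝓝[>] (0:ℝ))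
      ≤ Filter.limsup
        (fun R : ℝ => porosityGamma (Subtype.val '' B') (x' : X) R / ENNReal.ofReal R)
        (𝓝[>] (0:ℝ)) := by
    refine Filter.limsup_le_limsup (Eventually.of_forall fun R => ?_)
    exact ENNReal.div_le_div_right (key R) _
  exact lt_of_lt_of_le h hle


lemma forward_core {V : Subspace ℝ X} {D : Set X} (hD : (V : Set X) ⊆ closure D)
    {B : Set X} (x' : ↥V)
    (H : ∀ d ∈ D, ∀ q : ℚ, ∃ z ∈ (V : Set X), ∃ r : ℝ≥0,
        Metric.ball z (r : ℝ) ⊆ Metric.ball d (q : ℝ) \ B ∧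
        min (porosityGamma B d (q : ℝ)) (ENNReal.ofReal (q : ℝ)) / 2 ≤ (r : ℝ≥0∞))
    (hx : UpperPorousAt B (x' : X)) :
    UpperPorousAt (Subtype.val ⁻¹' B : Set ↥V) x' := by
  unfold UpperPorousAt at hx ⊢
  obtain ⟨c, hc0, hclt⟩ := exists_between hx
  set ε : ℝ := min c.toReal 1 with hε_def
  have hctop : c ≠ ⊤ := hclt.ne_top
  have hε0 : 0 < ε := lt_min (ENNReal.toReal_pos hc0.ne' hctop) one_pos
  have hε1 : ε ≤ 1 := min_le_right _ _
  have hεlt : ENNReal.ofReal ε < Filter.limsup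
      (fun R : ℝ => porosityGamma B (x' : X) R / ENNReal.ofReal R) (𝓝[>] (0:ℝ)) := by
    refine lt_of_le_of_lt ?_ hclt
    calc ENNReal.ofReal ε ≤ ENNReal.ofReal c.toReal :=
          ENNReal.ofReal_le_ofReal (min_le_left _ _)
      _ = c := ENNReal.ofReal_toReal hctop
  have hfreq : ∃ᶠ R in 𝓝[>] (0:ℝ),
      ENNReal.ofReal ε < porosityGamma B (x' : X) R / ENNReal.ofReal R :=
    Filter.frequently_lt_of_lt_limsup (by isBoundedDefault) hεlt
  have hfreq2 : ∃ᶠ R in 𝓝[>] (0:ℝ),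
      (ENNReal.ofReal ε < porosityGamma B (x' : X) R / ENNReal.ofReal R ∧ 0 < R) :=
    hfreq.and_eventually (eventually_mem_nhdsWithin)
  -- the doubling map
  have hmap : Filter.Tendsto (fun R : ℝ => 2 * R) (𝓝[>] (0:ℝ)) (𝓝[>] (0:ℝ)) := by
    rw [tendsto_nhdsWithin_iff]
    constructor
    · have h2 : Filter.Tendsto (fun R : ℝ => 2 * R) (𝓝 (0:ℝ)) (𝓝 (0:ℝ)) := by
        simpa using (continuous_mul_left (2:ℝ)).tendsto (0:ℝ)
      exact h2.mono_left nhdsWithin_le_nhds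
    · exact eventually_mem_nhdsWithin.mono fun R hR => by
        rw [Set.mem_Ioi] at hR ⊢; linarith
  have hmain : ∀ R : ℝ,
      (ENNReal.ofReal ε < porosityGamma B (x' : X) R / ENNReal.ofReal R ∧ 0 < R) →
      ENNReal.ofReal (ε / 4) ≤
        porosityGamma (Subtype.val ⁻¹' B : Set ↥V) x' (2 * R) / ENNReal.ofReal (2 * R) := by
    rintro R ⟨hRg, hR0⟩
    have hεR : 0 < ε * R := mul_pos hε0 hR0
    have hγR : ENNReal.ofReal (ε * R) < porosityGamma B (x' : X) R := by
      have h1 : ENNReal.ofReal ε * ENNReal.ofReal R < porosityGamma B (x' : X) R :=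
        ENNReal.mul_lt_of_lt_div hRg
      rwa [← ENNReal.ofReal_mul hε0.le] at h1
    -- approximate x by d ∈ D
    have hxcl : (x' : X) ∈ closure D := hD x'.2
    obtain ⟨d, hdD, hdx⟩ : ∃ d ∈ D, dist (x' : X) d < ε * R / 8 :=
      Metric.mem_closure_iff.1 hxcl (ε * R / 8) (by positivity)
    obtain ⟨q, hq1, hq2⟩ := exists_rat_btwn (show R + ε * R / 8 < R + ε * R / 4 by linarith)
    have hball1 : Metric.ball (x' : X) R ⊆ Metric.ball d (q : ℝ) := by
      intro w hw
      rw [mem_ball] at hw ⊢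
      have ht := dist_triangle w (x' : X) d
      linarith
    have hγd : ENNReal.ofReal (ε * R) < porosityGamma B d (q : ℝ) :=
      lt_of_lt_of_le hγR (porosityGamma_mono_ball hball1)
    obtain ⟨z, hzV, r, hzr, hrmin⟩ := H d hdD q
    have hRq : R < (q : ℝ) := by linarith
    have hεRq : ε * R ≤ (q : ℝ) := by nlinarith
    have hrlb : ENNReal.ofReal (ε * R / 2) ≤ (r : ℝ≥0∞) := by
      refine le_trans ?_ hrmin
      have h1 : ENNReal.ofReal (ε * R) ≤
          min (porosityGamma B d (q : ℝ)) (ENNReal.ofReal (q : ℝ)) :=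
        le_min hγd.le (ENNReal.ofReal_le_ofReal hεRq)
      calc ENNReal.ofReal (ε * R / 2) = ENNReal.ofReal (ε * R) / ENNReal.ofReal 2 := by
            rw [ENNReal.ofReal_div_of_pos (by norm_num)]
        _ = ENNReal.ofReal (ε * R) / 2 := by norm_num
        _ ≤ min (porosityGamma B d (q : ℝ)) (ENNReal.ofReal (q : ℝ)) / 2 :=
            ENNReal.div_le_div_right h1 2
    have hball2 : Metric.ball d (q : ℝ) ⊆ Metric.ball (x' : X) (2 * R) := by
      intro w hw
      rw [mem_ball] at hw ⊢
      have ht := dist_triangle w d (x' : X)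
      have hdx' : dist d (x' : X) < ε * R / 8 := by rw [dist_comm]; exact hdx
      nlinarith
    have hadm : ∃ z'' : ↥V,
        Metric.ball z'' (r : ℝ) ⊆ Metric.ball x' (2 * R) \ (Subtype.val ⁻¹' B) := by
      refine ⟨⟨z, hzV⟩, fun w hw => ?_⟩
      have hw' : (w : X) ∈ Metric.ball z (r : ℝ) := by
        rw [mem_ball] at hw ⊢
        rwa [Subtype.dist_eq] at hw
      have hwdq := hzr hw'
      constructor
      · rw [mem_ball, Subtype.dist_eq]
        exact mem_ball.1 (hball2 hwdq.1)
      · exact fun hwB => hwdq.2 hwB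
    have hγV : ENNReal.ofReal (ε * R / 2) ≤
        porosityGamma (Subtype.val ⁻¹' B : Set ↥V) x' (2 * R) :=
      le_trans hrlb (le_porosityGamma hadm)
    have hdivle : ENNReal.ofReal (ε * R / 2) / ENNReal.ofReal (2 * R) ≤
        porosityGamma (Subtype.val ⁻¹' B : Set ↥V) x' (2 * R) / ENNReal.ofReal (2 * R) :=
      ENNReal.div_le_div_right hγV _
    refine le_trans (le_of_eq ?_) hdivle
    rw [← ENNReal.ofReal_div_of_pos (by linarith)]
    congr 1
    field_simp
    ring
  have hfreq3 : ∃ᶠ R' in 𝓝[>] (0:ℝ), ENNReal.ofReal (ε / 4) ≤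
      porosityGamma (Subtype.val ⁻¹' B : Set ↥V) x' R' / ENNReal.ofReal R' :=
    hmap.frequently (hfreq2.mono fun R hR => hmain R hR)
  exact lt_of_lt_of_le (by simp [ENNReal.ofReal_pos]; linarith)
    (Filter.le_limsup_of_frequently_le' hfreq3)

end Core

/-- σ-upper porosity of Suslin subsets of a Banach space is separably determined. -/
theorem sigmaUpperPorous_separably_determined
    {X : Type*} [NormedAddCommGroup X] [NormedSpace ℝ X] [CompleteSpace X]
    (A : Set X) (hA : MeasureTheory.AnalyticSet A)
    (V₀ : Subspace ℝ X) (hV₀ : TopologicalSpace.IsSeparable (V₀ : Set X)) :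
    ∃ V : Subspace ℝ X, IsClosed (V : Set X) ∧ TopologicalSpace.IsSeparable (V : Set X) ∧
      V₀ ≤ V ∧
      (SigmaUpperPorous A ↔ SigmaUpperPorous ((Subtype.val ⁻¹' A) : Set V)) := by
  classical
  have hAsep : IsSeparable A := by
    rw [MeasureTheory.AnalyticSet] at hA
    rcases hA with h | ⟨f, hf, hfr⟩
    · rw [h]; exact countable_empty.isSeparable
    · rw [← hfr]; exact isSeparable_range hf
  obtain ⟨DA, hDAc, hDA⟩ := hAsep
  obtain ⟨T0, hT0c, hT0⟩ := hV₀
  obtain ⟨B, hBdef⟩ : ∃ B : ℕ → Set X,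
      SigmaUpperPorous A → (∀ n, UpperPorous (B n)) ∧ A = ⋃ n, B n := by
    by_cases hσ : SigmaUpperPorous A
    · obtain ⟨B, h1, h2⟩ := hσ; exact ⟨B, fun _ => ⟨h1, h2⟩⟩
    · exact ⟨fun _ => ∅, fun h => absurd h hσ⟩
  choose wz wr hw1 hw2 using fun (n : ℕ) (d : X) (q : ℚ) =>
    exists_porosity_witness (B n) d (q : ℝ)
  have hDofEx : ∀ C : Set X, ∃ DC : Set X,
      C.Countable → DC.Countable ∧ ((Submodule.span ℝ C : Submodule ℝ X) : Set X) ⊆ closure DC := by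
    intro C
    by_cases hC : C.Countable
    · obtain ⟨c, h1, h2⟩ := hC.isSeparable.span (R := ℝ)
      exact ⟨c, fun _ => ⟨h1, h2⟩⟩
    · exact ⟨∅, fun h => absurd h hC⟩
  choose Dof hDof using hDofEx
  set step : Set X → Set X := fun C =>
    (C ∪ Dof C) ∪ ⋃ (n : ℕ) (d ∈ Dof C) (q : ℚ), {wz n d q} with hstep_def
  set S : ℕ → Set X := fun k => Nat.rec ((T0 ∪ DA) : Set X) (fun _ C => step C) k with hS_def
  have hSsucc : ∀ k, S (k + 1) = step (S k) := fun k => rfl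
  have hSc : ∀ k, (S k).Countable := by
    intro k
    induction k with
    | zero => exact hT0c.union hDAc
    | succ k ih =>
      rw [hSsucc]
      refine (ih.union ((hDof _ ih).1)).union ?_
      refine countable_iUnion fun n => Set.Countable.biUnion ((hDof _ ih).1) fun d _ => ?_
      exact countable_iUnion fun q => countable_singleton _
  have hSmono : ∀ k, S k ⊆ S (k + 1) := fun k => by
    rw [hSsucc]
    exact subset_union_left.trans subset_union_left
  set Sω : Set X := ⋃ k, S k with hSω_def
  have hSωc : Sω.Countable := countable_iUnion hSc
  set V : Subspace ℝ X := (Submodule.span ℝ Sω).topologicalClosure with hV_def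
  have hVcoe : (V : Set X) = closure ((Submodule.span ℝ Sω : Submodule ℝ X) : Set X) :=
    Submodule.topologicalClosure_coe _
  have hVclosed : IsClosed (V : Set X) := Submodule.isClosed_topologicalClosure _
  have hVsep : IsSeparable (V : Set X) := by
    rw [hVcoe]
    exact (hSωc.isSeparable.span).closure
  have hSωV : Sω ⊆ (V : Set X) := by
    rw [hVcoe]
    exact Submodule.subset_span.trans subset_closure
  have hV₀le : V₀ ≤ V := by
    intro v hv
    have h2 : closure T0 ⊆ (V : Set X) := by
      rw [hVcoe]
      exact closure_mono
        ((subset_union_left.trans (subset_iUnion S 0)).trans Submodule.subset_span)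
    exact h2 (hT0 hv)
  have hAV : A ⊆ (V : Set X) := by
    refine hDA.trans ?_
    rw [hVcoe]
    exact closure_mono
      ((subset_union_right.trans (subset_iUnion S 0)).trans Submodule.subset_span)
  set D : Set X := ⋃ k, Dof (S k) with hD_def
  have hDdense : (V : Set X) ⊆ closure D := by
    rw [hVcoe, ← closure_closure (s := D)]
    refine closure_mono ?_
    have hdir : Directed (· ≤ ·) (fun k => Submodule.span ℝ (S k)) :=
      (monotone_nat_of_le_succ fun k => Submodule.span_mono (hSmono k)).directed_le
    have hspan : ((Submodule.span ℝ Sω : Submodule ℝ X) : Set X) =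
        ⋃ k, ((Submodule.span ℝ (S k) : Submodule ℝ X) : Set X) := by
      rw [hSω_def, Submodule.span_iUnion]
      exact Submodule.coe_iSup_of_directed _ hdir
    rw [hspan]
    refine iUnion_subset fun k => ((hDof (S k) (hSc k)).2).trans ?_
    exact closure_mono (subset_iUnion (fun k => Dof (S k)) k)
  have hwzV : ∀ (n : ℕ) (d : X), d ∈ D → ∀ q : ℚ, wz n d q ∈ (V : Set X) := by
    intro n d hd q
    obtain ⟨k, hk⟩ := mem_iUnion.1 hd
    refine hSωV (mem_iUnion.2 ⟨k + 1, ?_⟩)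
    rw [hSsucc]
    refine subset_union_right ?_
    refine mem_iUnion.2 ⟨n, mem_iUnion₂.2 ⟨d, hk, ?_⟩⟩
    exact mem_iUnion.2 ⟨q, rfl⟩
  have H : ∀ n : ℕ, ∀ d ∈ D, ∀ q : ℚ, ∃ z ∈ (V : Set X), ∃ r : ℝ≥0,
      Metric.ball z (r : ℝ) ⊆ Metric.ball d (q : ℝ) \ B n ∧
      min (porosityGamma (B n) d (q : ℝ)) (ENNReal.ofReal (q : ℝ)) / 2 ≤ (r : ℝ≥0∞) :=
    fun n d hd q => ⟨wz n d q, hwzV n d hd q, wr n d q, hw1 n d q, hw2 n d q⟩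
  refine ⟨V, hVclosed, hVsep, hV₀le, ?_⟩
  by_cases hσ : SigmaUpperPorous A
  · obtain ⟨hBpor, hBun⟩ := hBdef hσ
    refine iff_of_true hσ
      ⟨fun n => (Subtype.val ⁻¹' (B n) : Set ↥V),
       fun n x' hx' => forward_core hDdense x' (H n) (hBpor n _ hx'), ?_⟩
    rw [hBun, preimage_iUnion]
  · refine iff_of_false hσ fun hR => hσ ?_
    obtain ⟨B', hB'por, hB'un⟩ := hR
    refine ⟨fun n => Subtype.val '' (B' n), fun n x hx => ?_, ?_⟩
    · obtain ⟨x', hx'B, rfl⟩ := hx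
      exact upperPorousAt_image_val hx'B (hB'por n x' hx'B)
    · have hA' : A = Subtype.val '' ((Subtype.val ⁻¹' A) : Set ↥V) := by
        refine (Set.image_preimage_eq_iff.2 ?_).symm
        intro a ha
        exact ⟨⟨a, hAV ha⟩, rfl⟩
      rw [hA', hB'un, image_iUnion]
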